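/- Let s ∈ ℤ and let u, w be complex numbers with 0 < |u| < 1 and |u|^{−2s} < |w| < |u|^{−2s−2}. For each integer m set R_m = max(m, 2−m). Then Σ_{m∈ℤ} w^{6m−4s−8} ( Σ_{ℓ=0}^∞ ( u^{4(3ℓ+s+1)(3m+3ℓ−s−3)} − u^{4(3ℓ+s+3)(3m+3ℓ−s−1)} ) ) = Σ_{m∈ℤ} w^{6m−4s−8} u^{−(3m−2s−4)²} ( Σ_{j=0}^∞ ( u^{(3(R_m+2j)−2)²} − u^{(3(R_m+2j)+2)²} ) ), where each inner series converges absolutely for 0 < |u| < 1 and both outer series over m converge absolutely in the stated annulus. -/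
import Mathlib

open Finset

private lemma aux_anti {r : ℝ} (h0 : 0 < r) (h1 : r < 1) {a b : ℤ} (h : a ≤ b) :
    r ^ b ≤ r ^ a :=
  zpow_le_zpow_right_of_le_one₀ h0 h1.le h

private lemma summable_zpow_lin {r : ℝ} (h0 : 0 < r) (h1 : r < 1) (e : ℕ → ℤ) (E : ℤ)
    (he : ∀ n : ℕ, E + n ≤ e n) : Summable fun n : ℕ => r ^ e n := by
  refine Summable.of_nonneg_of_le (fun n => (zpow_pos h0 _).le) (fun n => ?_)
    ((summable_geometric_of_lt_one h0.le h1).mul_left (r ^ E))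
  calc r ^ e n ≤ r ^ (E + (n : ℤ)) := aux_anti h0 h1 (he n)
    _ = r ^ E * r ^ n := by rw [zpow_add₀ h0.ne', zpow_natCast]

private lemma tsum_zpow_lin_le {r : ℝ} (h0 : 0 < r) (h1 : r < 1) (e : ℕ → ℤ) (E : ℤ)
    (he : ∀ n : ℕ, E + n ≤ e n) : (∑' n : ℕ, r ^ e n) ≤ r ^ E * (1 - r)⁻¹ := by
  have hg : Summable fun n : ℕ => r ^ E * r ^ n :=
    (summable_geometric_of_lt_one h0.le h1).mul_left (r ^ E)
  calc (∑' n : ℕ, r ^ e n) ≤ ∑' n : ℕ, r ^ E * r ^ n := by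
        refine Summable.tsum_le_tsum (fun n => ?_) (summable_zpow_lin h0 h1 e E he) hg
        calc r ^ e n ≤ r ^ (E + (n : ℤ)) := aux_anti h0 h1 (he n)
          _ = r ^ E * r ^ n := by rw [zpow_add₀ h0.ne', zpow_natCast]
    _ = r ^ E * (1 - r)⁻¹ := by rw [tsum_mul_left, tsum_geometric_of_lt_one h0.le h1]

private lemma quad_ge (t : ℤ) (n : ℕ) : (-(t ^ 2) - 2) + (n : ℤ) ≤ (6 * n + t) ^ 2 := by
  have h : (0 : ℤ) ≤ n := Int.natCast_nonneg n
  nlinarith [sq_nonneg (6 * (n : ℤ) + t - 1), sq_nonneg (t - 1), h]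

private lemma summable_norm_zpow {u : ℂ} (h0 : 0 < ‖u‖) (h1 : ‖u‖ < 1) (e : ℕ → ℤ) (E : ℤ)
    (he : ∀ n : ℕ, E + n ≤ e n) : Summable fun n : ℕ => ‖u ^ e n‖ := by
  simpa only [norm_zpow] using summable_zpow_lin h0 h1 e E he

private lemma summable_c {u : ℂ} (h0 : 0 < ‖u‖) (h1 : ‖u‖ < 1) (e : ℕ → ℤ) (E : ℤ)
    (he : ∀ n : ℕ, E + n ≤ e n) : Summable fun n : ℕ => u ^ e n :=
  (summable_norm_zpow h0 h1 e E he).of_norm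

private lemma zpow_lin_eq {x : ℝ} (hx : 0 < x) (a b : ℤ) (n : ℕ) :
    x ^ (a * n + b) = x ^ b * (x ^ a) ^ n := by
  rw [zpow_add₀ hx.ne', mul_comm (x ^ (a * (n : ℤ)))]
  congr 1
  rw [zpow_mul, zpow_natCast]

private lemma core_eq {u : ℂ} (h0 : 0 < ‖u‖) (h1 : ‖u‖ < 1) (m : ℤ) :
    (∑' l : ℕ, (u ^ ((6 * (l : ℤ) + 3 * m - 2) ^ 2) - u ^ ((6 * (l : ℤ) + 3 * m + 2) ^ 2)))
      = ∑' j : ℕ, (u ^ ((3 * (max m (2 - m) + 2 * (j : ℤ)) - 2) ^ 2)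
          - u ^ ((3 * (max m (2 - m) + 2 * (j : ℤ)) + 2) ^ 2)) := by
  have hsA : Summable fun l : ℕ => u ^ ((6 * (l : ℤ) + 3 * m - 2) ^ 2) :=
    (summable_c h0 h1 (fun n => (6 * (n : ℤ) + (3 * m - 2)) ^ 2) _ (quad_ge (3 * m - 2))).congr
      (fun n => by congr 1; ring)
  have hsB : Summable fun l : ℕ => u ^ ((6 * (l : ℤ) + 3 * m + 2) ^ 2) :=
    (summable_c h0 h1 (fun n => (6 * (n : ℤ) + (3 * m + 2)) ^ 2) _ (quad_ge (3 * m + 2))).congr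
      (fun n => by congr 1; ring)
  rcases le_or_gt m 0 with hm | hm
  · have hR : max m (2 - m) = 2 - m := max_eq_right (by omega)
    rw [hR]
    have hsf : Summable fun l : ℕ =>
        u ^ ((6 * (l : ℤ) + 3 * m - 2) ^ 2) - u ^ ((6 * (l : ℤ) + 3 * m + 2) ^ 2) := hsA.sub hsB
    set N : ℕ := (1 - m).toNat with hNdef
    have hNcast : (N : ℤ) = 1 - m := Int.toNat_of_nonneg (by omega)
    rw [← Summable.sum_add_tsum_nat_add N hsf]
    have hzero : (∑ i ∈ range N,
        (u ^ ((6 * (i : ℤ) + 3 * m - 2) ^ 2) - u ^ ((6 * (i : ℤ) + 3 * m + 2) ^ 2))) = 0 := by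
      rw [Finset.sum_sub_distrib, sub_eq_zero]
      rw [← Finset.sum_range_reflect (fun i => u ^ ((6 * (i : ℤ) + 3 * m + 2) ^ 2)) N]
      refine Finset.sum_congr rfl fun i hi => ?_
      have hi' : i < N := Finset.mem_range.mp hi
      have hc : ((N - 1 - i : ℕ) : ℤ) = 1 - m - 1 - (i : ℤ) := by omega
      rw [hc]
      congr 1
      ring
    rw [hzero, zero_add]
    refine tsum_congr fun j => ?_
    have hc : ((j + N : ℕ) : ℤ) = (j : ℤ) + 1 - m := by omega
    rw [hc]
    congr 2 <;> ring
  · have hR : max m (2 - m) = m := max_eq_left (by omega)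
    rw [hR]
    refine tsum_congr fun l => ?_
    congr 2 <;> ring

private lemma inner_eq {u : ℂ} (h0 : 0 < ‖u‖) (h1 : ‖u‖ < 1) (s m : ℤ) :
    (∑' l : ℕ, (u ^ (4 * (3 * (l : ℤ) + s + 1) * (3 * m + 3 * (l : ℤ) - s - 3))
        - u ^ (4 * (3 * (l : ℤ) + s + 3) * (3 * m + 3 * (l : ℤ) - s - 1))))
      = u ^ (-(3 * m - 2 * s - 4) ^ 2) *
          ∑' j : ℕ, (u ^ ((3 * (max m (2 - m) + 2 * (j : ℤ)) - 2) ^ 2)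
            - u ^ ((3 * (max m (2 - m) + 2 * (j : ℤ)) + 2) ^ 2)) := by
  have hu : u ≠ 0 := by simpa using h0
  rw [← core_eq h0 h1 m, ← tsum_mul_left]
  refine tsum_congr fun l => ?_
  rw [mul_sub (u ^ (-(3 * m - 2 * s - 4) ^ 2)), ← zpow_add₀ hu, ← zpow_add₀ hu]
  congr 2 <;> ring

private lemma claim1_lem {u : ℂ} (h0 : 0 < ‖u‖) (h1 : ‖u‖ < 1) (s m : ℤ) :
    Summable (fun l : ℕ =>
      ‖u ^ (4 * (3 * (l : ℤ) + s + 1) * (3 * m + 3 * (l : ℤ) - s - 3))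
        - u ^ (4 * (3 * (l : ℤ) + s + 3) * (3 * m + 3 * (l : ℤ) - s - 1))‖) := by
  have hA : Summable fun l : ℕ =>
      ‖u ^ (4 * (3 * (l : ℤ) + s + 1) * (3 * m + 3 * (l : ℤ) - s - 3))‖ :=
    summable_norm_zpow h0 h1 _ (-(3 * m - 2) ^ 2 - 2 - (3 * m - 2 * s - 4) ^ 2)
      (fun n => by nlinarith [quad_ge (3 * m - 2) n])
  have hB : Summable fun l : ℕ =>
      ‖u ^ (4 * (3 * (l : ℤ) + s + 3) * (3 * m + 3 * (l : ℤ) - s - 1))‖ :=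
    summable_norm_zpow h0 h1 _ (-(3 * m + 2) ^ 2 - 2 - (3 * m - 2 * s - 4) ^ 2)
      (fun n => by nlinarith [quad_ge (3 * m + 2) n])
  exact Summable.of_nonneg_of_le (fun l => norm_nonneg _) (fun l => norm_sub_le _ _) (hA.add hB)

private lemma claim2A {u : ℂ} (h0 : 0 < ‖u‖) (h1 : ‖u‖ < 1) (R : ℤ) :
    Summable fun j : ℕ => ‖u ^ ((3 * (R + 2 * (j : ℤ)) - 2) ^ 2)‖ :=
  summable_norm_zpow h0 h1 _ (-(3 * R - 2) ^ 2 - 2)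
    (fun n => by nlinarith [quad_ge (3 * R - 2) n])

private lemma claim2B {u : ℂ} (h0 : 0 < ‖u‖) (h1 : ‖u‖ < 1) (R : ℤ) :
    Summable fun j : ℕ => ‖u ^ ((3 * (R + 2 * (j : ℤ)) + 2) ^ 2)‖ :=
  summable_norm_zpow h0 h1 _ (-(3 * R + 2) ^ 2 - 2)
    (fun n => by nlinarith [quad_ge (3 * R + 2) n])

private lemma claim2_lem {u : ℂ} (h0 : 0 < ‖u‖) (h1 : ‖u‖ < 1) (R : ℤ) :
    Summable (fun j : ℕ =>
      ‖u ^ ((3 * (R + 2 * (j : ℤ)) - 2) ^ 2) - u ^ ((3 * (R + 2 * (j : ℤ)) + 2) ^ 2)‖) :=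
  Summable.of_nonneg_of_le (fun l => norm_nonneg _) (fun l => norm_sub_le _ _)
    ((claim2A h0 h1 R).add (claim2B h0 h1 R))

private lemma G_bound {u : ℂ} (h0 : 0 < ‖u‖) (h1 : ‖u‖ < 1) (R : ℤ) (hR : 1 ≤ R) :
    ‖∑' j : ℕ, (u ^ ((3 * (R + 2 * (j : ℤ)) - 2) ^ 2) - u ^ ((3 * (R + 2 * (j : ℤ)) + 2) ^ 2))‖
      ≤ 2 * (1 - ‖u‖)⁻¹ * ‖u‖ ^ ((3 * R - 2) ^ 2) := by
  have heA : ∀ n : ℕ, (3 * R - 2) ^ 2 + (n : ℤ) ≤ (3 * (R + 2 * (n : ℤ)) - 2) ^ 2 := by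
    intro n
    have hj : (0 : ℤ) ≤ n := Int.natCast_nonneg n
    nlinarith [mul_nonneg hj (show (0:ℤ) ≤ 3 * R - 3 by omega), sq_nonneg (n : ℤ)]
  have heB : ∀ n : ℕ, (3 * R - 2) ^ 2 + (n : ℤ) ≤ (3 * (R + 2 * (n : ℤ)) + 2) ^ 2 := by
    intro n
    have hj : (0 : ℤ) ≤ n := Int.natCast_nonneg n
    nlinarith [mul_nonneg hj (show (0:ℤ) ≤ 3 * R - 3 by omega), sq_nonneg (n : ℤ), hR]
  calc ‖∑' j : ℕ, (u ^ ((3 * (R + 2 * (j : ℤ)) - 2) ^ 2)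
          - u ^ ((3 * (R + 2 * (j : ℤ)) + 2) ^ 2))‖
      ≤ ∑' j : ℕ, ‖u ^ ((3 * (R + 2 * (j : ℤ)) - 2) ^ 2)
          - u ^ ((3 * (R + 2 * (j : ℤ)) + 2) ^ 2)‖ := norm_tsum_le_tsum_norm (claim2_lem h0 h1 R)
    _ ≤ ∑' j : ℕ, (‖u ^ ((3 * (R + 2 * (j : ℤ)) - 2) ^ 2)‖
          + ‖u ^ ((3 * (R + 2 * (j : ℤ)) + 2) ^ 2)‖) :=
        Summable.tsum_le_tsum (fun j => norm_sub_le _ _) (claim2_lem h0 h1 R)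
          ((claim2A h0 h1 R).add (claim2B h0 h1 R))
    _ = (∑' j : ℕ, ‖u ^ ((3 * (R + 2 * (j : ℤ)) - 2) ^ 2)‖)
          + ∑' j : ℕ, ‖u ^ ((3 * (R + 2 * (j : ℤ)) + 2) ^ 2)‖ :=
        Summable.tsum_add (claim2A h0 h1 R) (claim2B h0 h1 R)
    _ ≤ ‖u‖ ^ ((3 * R - 2) ^ 2) * (1 - ‖u‖)⁻¹ + ‖u‖ ^ ((3 * R - 2) ^ 2) * (1 - ‖u‖)⁻¹ := by
        gcongr ?_ + ?_
        · calc (∑' j : ℕ, ‖u ^ ((3 * (R + 2 * (j : ℤ)) - 2) ^ 2)‖)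
              = ∑' j : ℕ, ‖u‖ ^ ((3 * (R + 2 * (j : ℤ)) - 2) ^ 2) := by
                simp only [norm_zpow]
            _ ≤ _ := tsum_zpow_lin_le h0 h1 _ _ heA
        · calc (∑' j : ℕ, ‖u ^ ((3 * (R + 2 * (j : ℤ)) + 2) ^ 2)‖)
              = ∑' j : ℕ, ‖u‖ ^ ((3 * (R + 2 * (j : ℤ)) + 2) ^ 2) := by
                simp only [norm_zpow]
            _ ≤ _ := tsum_zpow_lin_le h0 h1 _ _ heB
    _ = 2 * (1 - ‖u‖)⁻¹ * ‖u‖ ^ ((3 * R - 2) ^ 2) := by ring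

private lemma D_summable {r A : ℝ} (h0 : 0 < r) (h1 : r < 1) (s : ℤ)
    (hw1 : r ^ (-2 * s) < A) (hw2 : A < r ^ (-2 * s - 2)) :
    Summable fun m : ℤ =>
      A ^ (6 * m - 4 * s - 8) * r ^ ((3 * max m (2 - m) - 2) ^ 2 - (3 * m - 2 * s - 4) ^ 2) := by
  have hA0 : 0 < A := lt_trans (zpow_pos h0 _) hw1
  have hx : A * r ^ (2 * s + 2) < 1 := by
    calc A * r ^ (2 * s + 2) < r ^ (-2 * s - 2) * r ^ (2 * s + 2) :=
          mul_lt_mul_of_pos_right hw2 (zpow_pos h0 _)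
      _ = 1 := by rw [← zpow_add₀ h0.ne']; norm_num
  have hy : 1 < A * r ^ (2 * s) := by
    calc (1 : ℝ) = r ^ (-2 * s) * r ^ (2 * s) := by rw [← zpow_add₀ h0.ne']; norm_num
      _ < A * r ^ (2 * s) := mul_lt_mul_of_pos_right hw1 (zpow_pos h0 _)
  -- positive branch ratio
  have hq1eq : A ^ (6 : ℤ) * r ^ (12 * s + 12) = (A * r ^ (2 * s + 2)) ^ (6 : ℕ) := by
    rw [mul_pow, ← zpow_natCast A 6, ← zpow_natCast (r ^ (2 * s + 2)) 6, ← zpow_mul]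
    congr 1
    congr 1
    omega
  have hq1lt : A ^ (6 : ℤ) * r ^ (12 * s + 12) < 1 := by
    rw [hq1eq]
    exact pow_lt_one₀ (mul_nonneg hA0.le (zpow_pos h0 _).le) hx (by norm_num)
  have hq1nn : 0 ≤ A ^ (6 : ℤ) * r ^ (12 * s + 12) :=
    (mul_pos (zpow_pos hA0 _) (zpow_pos h0 _)).le
  -- negative branch ratio
  have hq2eq : A ^ (-6 : ℤ) * r ^ (-12 * s) = ((A * r ^ (2 * s))⁻¹) ^ (6 : ℕ) := by
    rw [inv_pow, ← zpow_natCast (A * r ^ (2 * s)) 6, ← zpow_neg, mul_zpow, ← zpow_mul]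
    congr 1
    congr 1
    omega
  have hq2lt : A ^ (-6 : ℤ) * r ^ (-12 * s) < 1 := by
    rw [hq2eq]
    exact pow_lt_one₀ (inv_nonneg.mpr (by positivity)) ((inv_lt_one₀ (by positivity)).mpr hy)
      (by norm_num)
  have hq2nn : 0 ≤ A ^ (-6 : ℤ) * r ^ (-12 * s) :=
    (mul_pos (zpow_pos hA0 _) (zpow_pos h0 _)).le
  apply Summable.of_nat_of_neg
  · rw [← summable_nat_add_iff 2]
    refine ((summable_geometric_of_lt_one hq1nn hq1lt).mul_left
      (A ^ (4 - 4 * s) * r ^ ((2 * s + 2) * (6 - 2 * s)))).congr fun n => ?_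
    have hc : ((n + 2 : ℕ) : ℤ) = (n : ℤ) + 2 := by push_cast; ring
    simp only [hc]
    have hmax : max ((n : ℤ) + 2) (2 - ((n : ℤ) + 2)) = (n : ℤ) + 2 :=
      max_eq_left (by omega)
    rw [hmax]
    have e1 : 6 * ((n : ℤ) + 2) - 4 * s - 8 = 6 * (n : ℤ) + (4 - 4 * s) := by ring
    have e2 : (3 * ((n : ℤ) + 2) - 2) ^ 2 - (3 * ((n : ℤ) + 2) - 2 * s - 4) ^ 2
        = (12 * s + 12) * (n : ℤ) + (2 * s + 2) * (6 - 2 * s) := by ring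
    rw [e1, e2, zpow_lin_eq hA0, zpow_lin_eq h0, mul_pow]
    ring
  · refine ((summable_geometric_of_lt_one hq2nn hq2lt).mul_left
      (A ^ (-4 * s - 8) * r ^ ((-2 * s) * (2 * s + 8)))).congr fun n => ?_
    have hmax : max (-(n : ℤ)) (2 - -(n : ℤ)) = 2 - -(n : ℤ) :=
      max_eq_right (by omega)
    rw [hmax]
    have e1 : 6 * (-(n : ℤ)) - 4 * s - 8 = (-6) * (n : ℤ) + (-4 * s - 8) := by ring
    have e2 : (3 * (2 - -(n : ℤ)) - 2) ^ 2 - (3 * (-(n : ℤ)) - 2 * s - 4) ^ 2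
        = (-12 * s) * (n : ℤ) + (-2 * s) * (2 * s + 8) := by ring
    rw [e1, e2, zpow_lin_eq hA0, zpow_lin_eq h0, mul_pow]
    ring

/-- Full character decomposition `ch L_{−2/3}^s = Σ_{m∈ℤ} ch F_{2m−8/3−4s/3} · ch M_{m,2}`
for `sl(2)`-hat at level `−4/3`: with `R_m = max(m, 2−m)`,
`Σ_{m∈ℤ} w^{6m−4s−8} (Σ_{ℓ≥0} (u^{4(3ℓ+s+1)(3m+3ℓ−s−3)} − u^{4(3ℓ+s+3)(3m+3ℓ−s−1)}))
 = Σ_{m∈ℤ} w^{6m−4s−8} u^{−(3m−2s−4)²} (Σ_{j≥0} (u^{(3(R_m+2j)−2)²} − u^{(3(R_m+2j)+2)²}))`,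
each inner series converging absolutely for `0 < |u| < 1`, and both outer series over `m`
converging absolutely in the annulus `|u|^{−2s} < |w| < |u|^{−2s−2}`. -/
theorem stmt_11 (s : ℤ) (u w : ℂ)
    (hu0 : 0 < ‖u‖) (hu1 : ‖u‖ < 1)
    (hw1 : ‖u‖ ^ (-2 * s) < ‖w‖) (hw2 : ‖w‖ < ‖u‖ ^ (-2 * s - 2)) :
    (∀ m : ℤ, Summable (fun l : ℕ =>
        ‖u ^ (4 * (3 * (l : ℤ) + s + 1) * (3 * m + 3 * (l : ℤ) - s - 3))
          - u ^ (4 * (3 * (l : ℤ) + s + 3) * (3 * m + 3 * (l : ℤ) - s - 1))‖)) ∧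
    (∀ m : ℤ, Summable (fun j : ℕ =>
        ‖u ^ ((3 * (max m (2 - m) + 2 * (j : ℤ)) - 2) ^ 2)
          - u ^ ((3 * (max m (2 - m) + 2 * (j : ℤ)) + 2) ^ 2)‖)) ∧
    Summable (fun m : ℤ => ‖w ^ (6 * m - 4 * s - 8) *
        ∑' l : ℕ, (u ^ (4 * (3 * (l : ℤ) + s + 1) * (3 * m + 3 * (l : ℤ) - s - 3))
          - u ^ (4 * (3 * (l : ℤ) + s + 3) * (3 * m + 3 * (l : ℤ) - s - 1)))‖) ∧
    Summable (fun m : ℤ => ‖w ^ (6 * m - 4 * s - 8) * u ^ (-(3 * m - 2 * s - 4) ^ 2) *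
        ∑' j : ℕ, (u ^ ((3 * (max m (2 - m) + 2 * (j : ℤ)) - 2) ^ 2)
          - u ^ ((3 * (max m (2 - m) + 2 * (j : ℤ)) + 2) ^ 2))‖) ∧
    (∑' m : ℤ, w ^ (6 * m - 4 * s - 8) *
        ∑' l : ℕ, (u ^ (4 * (3 * (l : ℤ) + s + 1) * (3 * m + 3 * (l : ℤ) - s - 3))
          - u ^ (4 * (3 * (l : ℤ) + s + 3) * (3 * m + 3 * (l : ℤ) - s - 1))))
      = ∑' m : ℤ, w ^ (6 * m - 4 * s - 8) * u ^ (-(3 * m - 2 * s - 4) ^ 2) *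
          ∑' j : ℕ, (u ^ ((3 * (max m (2 - m) + 2 * (j : ℤ)) - 2) ^ 2)
            - u ^ ((3 * (max m (2 - m) + 2 * (j : ℤ)) + 2) ^ 2)) := by
  have hmax1 : ∀ m : ℤ, 1 ≤ max m (2 - m) := fun m => le_max_iff.mpr (by omega)
  have hc4 : Summable (fun m : ℤ => ‖w ^ (6 * m - 4 * s - 8) * u ^ (-(3 * m - 2 * s - 4) ^ 2) *
      ∑' j : ℕ, (u ^ ((3 * (max m (2 - m) + 2 * (j : ℤ)) - 2) ^ 2)
        - u ^ ((3 * (max m (2 - m) + 2 * (j : ℤ)) + 2) ^ 2))‖) := by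
    refine Summable.of_nonneg_of_le (fun m => norm_nonneg _) (fun m => ?_)
      ((D_summable hu0 hu1 s hw1 hw2).mul_left (2 * (1 - ‖u‖)⁻¹))
    rw [norm_mul, norm_mul, norm_zpow, norm_zpow]
    calc ‖w‖ ^ (6 * m - 4 * s - 8) * ‖u‖ ^ (-(3 * m - 2 * s - 4) ^ 2) *
          ‖∑' j : ℕ, (u ^ ((3 * (max m (2 - m) + 2 * (j : ℤ)) - 2) ^ 2)
            - u ^ ((3 * (max m (2 - m) + 2 * (j : ℤ)) + 2) ^ 2))‖
        ≤ ‖w‖ ^ (6 * m - 4 * s - 8) * ‖u‖ ^ (-(3 * m - 2 * s - 4) ^ 2) *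
          (2 * (1 - ‖u‖)⁻¹ * ‖u‖ ^ ((3 * max m (2 - m) - 2) ^ 2)) := by
          refine mul_le_mul_of_nonneg_left (G_bound hu0 hu1 _ (hmax1 m)) ?_
          exact mul_nonneg (zpow_nonneg (norm_nonneg w) _) (zpow_nonneg (norm_nonneg u) _)
      _ = 2 * (1 - ‖u‖)⁻¹ * (‖w‖ ^ (6 * m - 4 * s - 8) *
            ‖u‖ ^ ((3 * max m (2 - m) - 2) ^ 2 - (3 * m - 2 * s - 4) ^ 2)) := by
          rw [show (3 * max m (2 - m) - 2) ^ 2 - (3 * m - 2 * s - 4) ^ 2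
            = -(3 * m - 2 * s - 4) ^ 2 + (3 * max m (2 - m) - 2) ^ 2 by ring,
            zpow_add₀ (ne_of_gt hu0)]
          ring
  refine ⟨fun m => claim1_lem hu0 hu1 s m, fun m => claim2_lem hu0 hu1 (max m (2 - m)), ?_,
    hc4, ?_⟩
  · exact hc4.congr fun m => by rw [inner_eq hu0 hu1 s m, ← mul_assoc]
  · exact tsum_congr fun m => by rw [inner_eq hu0 hu1 s m, ← mul_assoc]
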